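/- arXiv:2602.22179 — 2 statements merged into one kernel-verified Lean document; each statement's English description precedes it below -/
import Mathlib

section
/- Fix real numbers α < β and define, for τ > 0 and x ∈ ℝ, the soft condition π̂(x; α, β, τ) := exp((2x − α)/τ) / ( exp(x/τ) + exp((2x − α)/τ) + exp((3x − α − β)/τ) ). Then for every x with α < x < β, the soft condition converges to 1 as the temperature vanishes: lim_{τ → 0⁺} π̂(x; α, β, τ) = 1. -/
open Filter Topology

/-- The soft condition `π̂(x; α, β, τ)` of the paper: a differentiable relaxation of the
Boolean condition `x ∈ (α, β)`, with lower bound `α`, upper bound `β`, temperature `τ`. -/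
noncomputable def softCond (α β τ x : ℝ) : ℝ :=
  Real.exp ((2 * x - α) / τ) /
    (Real.exp (x / τ) + Real.exp ((2 * x - α) / τ) + Real.exp ((3 * x - α - β) / τ))

lemma exp_div_tendsto_zero (c : ℝ) (hc : c < 0) :
    Tendsto (fun τ : ℝ => Real.exp (c / τ)) (𝓝[>] (0 : ℝ)) (𝓝 0) := by
  have h1 : Tendsto (fun τ : ℝ => c / τ) (𝓝[>] (0 : ℝ)) atBot := by
    have := tendsto_inv_nhdsGT_zero.const_mul_atTop_of_neg hc
    simpa [div_eq_mul_inv] using this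
  exact Real.tendsto_exp_atBot.comp h1

/-- **Inside limit.** For `α < x < β`, the soft condition converges to `1` as the
temperature vanishes, `τ → 0⁺`. -/
theorem softCond_tendsto_one_of_mem
    (α β : ℝ) (hαβ : α < β) (x : ℝ) (hα : α < x) (hβ : x < β) :
    Tendsto (fun τ => softCond α β τ x) (𝓝[>] (0 : ℝ)) (𝓝 1) := by
  have key : ∀ τ ∈ Set.Ioi (0:ℝ), softCond α β τ x =
      1 / (Real.exp ((α - x) / τ) + 1 + Real.exp ((x - β) / τ)) := by
    intro τ hτ
    have hτ' : (τ:ℝ) ≠ 0 := ne_of_gt hτ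
    unfold softCond
    rw [div_eq_div_iff]
    · rw [one_mul, mul_add, mul_add, mul_one, ← Real.exp_add, ← Real.exp_add]
      have e1 : (2*x-α)/τ + (α-x)/τ = x/τ := by field_simp; ring
      have e2 : (2*x-α)/τ + (x-β)/τ = (3*x-α-β)/τ := by rw [← add_div]; congr 1; ring
      rw [e1, e2]
    · positivity
    · positivity
  have h1 := exp_div_tendsto_zero (α - x) (by linarith)
  have h2 := exp_div_tendsto_zero (x - β) (by linarith)
  have hmain : Tendsto (fun τ : ℝ =>
      1 / (Real.exp ((α - x) / τ) + 1 + Real.exp ((x - β) / τ))) (𝓝[>] (0:ℝ)) (𝓝 1) := by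
    have := (tendsto_const_nhds : Tendsto (fun _ : ℝ => (1:ℝ)) (𝓝[>] (0:ℝ)) (𝓝 1)).div ((h1.add tendsto_const_nhds).add h2)
      (by norm_num : (0:ℝ) + 1 + 0 ≠ 0)
    simpa [Pi.div_def, one_div] using this
  exact hmain.congr' (eventually_nhdsWithin_of_forall fun τ hτ => (key τ hτ).symm)
end

section
/- Fix p ≥ 1, bounds α_j < β_j for j = 1, …, p, weights a₁, …, a_p with a_j > 0 for all j, and a point x ∈ ℝ^p. Define the soft conditions π̂(x_j; α_j, β_j, τ) := exp((2x_j − α_j)/τ) / ( exp(x_j/τ) + exp((2x_j − α_j)/τ) + exp((3x_j − α_j − β_j)/τ) ) and the soft rule σ̂(x; α, β, a, τ) := (Σ_{j=1}^p a_j) / (Σ_{j=1}^p a_j · π̂(x_j; α_j, β_j, τ)⁻¹). If α_j < x_j < β_j for every j = 1, …, p, then lim_{τ → 0⁺} σ̂(x; α, β, a, τ) = 1; whereas if there exists some index k with x_k < α_k or x_k > β_k, then lim_{τ → 0⁺} σ̂(x; α, β, a, τ) = 0. -/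
open Filter Topology

/-- The soft rule `σ̂(x; α, β, a, τ)` of the paper: the weighted harmonic mean of the
per-feature soft conditions. -/
noncomputable def softRule {p : ℕ} (α β a : Fin p → ℝ) (τ : ℝ) (x : Fin p → ℝ) : ℝ :=
  (∑ j, a j) / (∑ j, a j * (softCond (α j) (β j) τ (x j))⁻¹)

lemma softCond_inv (α β τ x : ℝ) :
    (softCond α β τ x)⁻¹ =
      Real.exp ((α - x) / τ) + 1 + Real.exp ((x - β) / τ) := by
  have h1 : Real.exp ((α - x) / τ) = Real.exp (x / τ) / Real.exp ((2 * x - α) / τ) := by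
    rw [← Real.exp_sub]; congr 1; ring
  have h2 : Real.exp ((x - β) / τ) =
      Real.exp ((3 * x - α - β) / τ) / Real.exp ((2 * x - α) / τ) := by
    rw [← Real.exp_sub]; congr 1; ring
  have hne : Real.exp ((2 * x - α) / τ) ≠ 0 := (Real.exp_pos _).ne'
  rw [softCond, h1, h2]
  field_simp

lemma tendsto_exp_div_neg {c : ℝ} (hc : c < 0) :
    Tendsto (fun τ : ℝ => Real.exp (c / τ)) (𝓝[>] (0 : ℝ)) (𝓝 0) := by
  apply Real.tendsto_exp_atBot.comp
  have h1 : Tendsto (fun τ : ℝ => (-c) * τ⁻¹) (𝓝[>] (0 : ℝ)) atTop :=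
    tendsto_inv_nhdsGT_zero.const_mul_atTop (neg_pos.2 hc)
  have h2 : Tendsto (fun τ : ℝ => -((-c) * τ⁻¹)) (𝓝[>] (0 : ℝ)) atBot :=
    tendsto_neg_atTop_atBot.comp h1
  convert h2 using 2 with τ
  rw [div_eq_mul_inv]; ring

lemma tendsto_exp_div_pos {c : ℝ} (hc : 0 < c) :
    Tendsto (fun τ : ℝ => Real.exp (c / τ)) (𝓝[>] (0 : ℝ)) atTop := by
  apply Real.tendsto_exp_atTop.comp
  have h1 : Tendsto (fun τ : ℝ => c * τ⁻¹) (𝓝[>] (0 : ℝ)) atTop :=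
    tendsto_inv_nhdsGT_zero.const_mul_atTop hc
  exact h1.congr (fun τ => (div_eq_mul_inv c τ).symm)

/-- **Annealing the soft rule to a crisp hyper-box.** With bounds `α_j < β_j` and strictly
positive weights `a_j`: if `α_j < x_j < β_j` for every feature `j`, the soft rule converges
to `1` as the temperature vanishes, `τ → 0⁺`; whereas if some feature `k` satisfies
`x_k < α_k` or `x_k > β_k`, it converges to `0`. -/
theorem softRule_tendsto_indicator
    {p : ℕ} (hp : 1 ≤ p) (α β a : Fin p → ℝ)
    (hαβ : ∀ j, α j < β j) (ha : ∀ j, 0 < a j) (x : Fin p → ℝ) :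
    ((∀ j, α j < x j ∧ x j < β j) →
        Tendsto (fun τ => softRule α β a τ x) (𝓝[>] (0 : ℝ)) (𝓝 1)) ∧
      ((∃ k, x k < α k ∨ β k < x k) →
        Tendsto (fun τ => softRule α β a τ x) (𝓝[>] (0 : ℝ)) (𝓝 0)) := by
  have : NeBot (𝓝[>] (0:ℝ)) := nhdsGT_neBot 0
  set f : ℝ → Fin p → ℝ := fun τ j =>
    Real.exp ((α j - x j) / τ) + 1 + Real.exp ((x j - β j) / τ) with hf
  have hrule : ∀ τ, softRule α β a τ x = (∑ j, a j) / (∑ j, a j * f τ j) := by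
    intro τ
    simp only [softRule, softCond_inv, hf]
  have hfpos : ∀ τ j, 0 < f τ j := fun τ j => by
    have := Real.exp_pos ((α j - x j) / τ)
    have := Real.exp_pos ((x j - β j) / τ)
    simp only [hf]; linarith
  have hterm_nonneg : ∀ τ j, 0 ≤ a j * f τ j := fun τ j =>
    le_of_lt (mul_pos (ha j) (hfpos τ j))
  constructor
  · intro hin
    have hsum : Tendsto (fun τ => ∑ j, a j * f τ j) (𝓝[>] (0:ℝ)) (𝓝 (∑ j, a j)) := by
      have : ∀ j : Fin p, Tendsto (fun τ => a j * f τ j) (𝓝[>] (0:ℝ)) (𝓝 (a j)) := by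
        intro j
        have h1 := tendsto_exp_div_neg (sub_neg.2 (hin j).1)
        have h2 := tendsto_exp_div_neg (sub_neg.2 (hin j).2)
        have : Tendsto (fun τ => f τ j) (𝓝[>] (0:ℝ)) (𝓝 1) := by
          have := (h1.add (tendsto_const_nhds (x := (1:ℝ)))).add h2
          simpa using this
        simpa using this.const_mul (a j)
      simpa using tendsto_finset_sum Finset.univ (fun j _ => this j)
    have hane : (∑ j, a j) ≠ 0 := by
      have : Nonempty (Fin p) := Fin.pos_iff_nonempty.mp hp
      exact (Finset.sum_pos (fun j _ => ha j) Finset.univ_nonempty).ne'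
    have := Tendsto.div (tendsto_const_nhds (x := ∑ j, a j)) hsum hane
    rw [div_self hane] at this
    exact Tendsto.congr (fun τ => (hrule τ).symm) this
  · rintro ⟨k, hk⟩
    have hktop : Tendsto (fun τ => f τ k) (𝓝[>] (0:ℝ)) atTop := by
      rcases hk with h | h
      · refine tendsto_atTop_mono (fun τ => ?_) (tendsto_exp_div_pos (sub_pos.2 h))
        have := Real.exp_pos ((x k - β k) / τ)
        simp only [hf]; linarith
      · refine tendsto_atTop_mono (fun τ => ?_) (tendsto_exp_div_pos (sub_pos.2 h))
        have := Real.exp_pos ((α k - x k) / τ)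
        simp only [hf]; linarith
    have hsumtop : Tendsto (fun τ => ∑ j, a j * f τ j) (𝓝[>] (0:ℝ)) atTop := by
      refine tendsto_atTop_mono (fun τ => ?_) (hktop.const_mul_atTop (ha k))
      exact Finset.single_le_sum (fun j _ => hterm_nonneg τ j) (Finset.mem_univ k)
    have := Tendsto.div_atTop (tendsto_const_nhds (x := ∑ j, a j)) hsumtop
    exact Tendsto.congr (fun τ => (hrule τ).symm) this
end
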